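/- If uv₁ and uv₂ are two distinct edges incident to a common vertex u in a Euclidean minimum spanning tree of a finite point set V in the plane, then the angle ∠(v₁, u, v₂) is at least π/3. -/

import Mathlib

open EuclideanGeometry Real Finset

/-- Total Euclidean length of the edges of a graph on a finite point set. -/
noncomputable def edgeWeight {V : Type*} [Fintype V]
    (p : V → EuclideanSpace ℝ (Fin 2)) (T : SimpleGraph V) : ℝ := by
  classical
  exact ∑ e ∈ T.edgeFinset,
    Sym2.lift ⟨fun a b => dist (p a) (p b), fun a b => by simp [dist_comm]⟩ e

/-- `T` is a Euclidean minimum spanning tree of the point set `p '' V`. -/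
def IsEMST {V : Type*} [Fintype V] (p : V → EuclideanSpace ℝ (Fin 2))
    (T : SimpleGraph V) : Prop :=
  T.Connected ∧ T.IsAcyclic ∧
    ∀ T' : SimpleGraph V, T'.Connected → T'.IsAcyclic → edgeWeight p T ≤ edgeWeight p T'


lemma dist_lt_of_angle_lt {a b c : EuclideanSpace ℝ (Fin 2)}
    (hab : a ≠ b) (hle : dist a b ≤ dist c b) (hangle : ∠ a b c < π / 3) :
    dist a c < dist c b := by
  have hA : 0 < dist a b := dist_pos.mpr hab
  have hcos : Real.cos (π / 3) < Real.cos (∠ a b c) := by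
    apply Real.cos_lt_cos_of_nonneg_of_le_pi (angle_nonneg a b c)
    · linarith [Real.pi_pos]
    · exact hangle
  rw [Real.cos_pi_div_three] at hcos
  have hlaw := EuclideanGeometry.law_cos a b c
  have hB : 0 < dist c b := lt_of_lt_of_le hA hle
  have k1 : 2 * dist a b * dist c b * (1/2) < 2 * dist a b * dist c b * Real.cos (∠ a b c) :=
    mul_lt_mul_of_pos_left hcos (by positivity)
  have k2 : dist a b * dist a b ≤ dist a b * dist c b :=
    mul_le_mul_of_nonneg_left hle hA.le
  have h2 : dist a c * dist a c < dist c b * dist c b := by nlinarith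
  nlinarith [dist_nonneg (x := a) (y := c), dist_nonneg (x := c) (y := b)]


lemma reachable_of_forall_adj {V : Type*} {G H : SimpleGraph V}
    (h : ∀ a b, G.Adj a b → H.Reachable a b) {a b : V} (hr : G.Reachable a b) :
    H.Reachable a b := by
  obtain ⟨w⟩ := hr
  induction w with
  | nil => exact SimpleGraph.Reachable.refl _
  | cons hadj _ ih => exact (h _ _ hadj).trans ih

lemma tree_swap {V : Type*} [Fintype V] (T : SimpleGraph V)
    (hc : T.Connected) (ha : T.IsAcyclic) {u v₁ v₂ : V}
    (h1 : T.Adj u v₁) (h2 : T.Adj u v₂) (hne : v₁ ≠ v₂) :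
    (∃ T' : SimpleGraph V, T'.Connected ∧ T'.IsAcyclic ∧
      T'.edgeSet = (T.edgeSet \ {s(u, v₂)}) ∪ {s(v₁, v₂)}) ∧ ¬ T.Adj v₁ v₂ := by
  classical
  have hu1 : u ≠ v₁ := h1.ne
  have hu2 : u ≠ v₂ := h2.ne
  have hnoadj12 : ¬ T.Adj v₁ v₂ := by
    intro h12
    have huniq := ha.path_unique
      (⟨SimpleGraph.Walk.cons h2 SimpleGraph.Walk.nil, by
        simp [SimpleGraph.Walk.cons_isPath_iff, hu2]⟩ : T.Path u v₂)
      (⟨SimpleGraph.Walk.cons h1 (SimpleGraph.Walk.cons h12 SimpleGraph.Walk.nil), by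
        simp [SimpleGraph.Walk.cons_isPath_iff, hu1, hu2, hne]⟩ : T.Path u v₂)
    have hlen := congrArg (fun q : T.Path u v₂ => (q : T.Walk u v₂).length) huniq
    simp at hlen
  refine And.intro ?_ hnoadj12
  refine ⟨(T \ SimpleGraph.fromEdgeSet {s(u, v₂)}) ⊔ SimpleGraph.fromEdgeSet {s(v₁, v₂)},
    ?_, ?_, ?_⟩
  case refine_3 =>
    ext f
    induction f using Sym2.ind with
    | _ a b =>
      simp only [SimpleGraph.edgeSet_sup, SimpleGraph.edgeSet_sdiff,
        SimpleGraph.edgeSet_fromEdgeSet, SimpleGraph.edgeSet_sdiff_sdiff_isDiag,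
        Set.mem_union, Set.mem_diff, Set.mem_singleton_iff, Set.mem_setOf_eq,
        SimpleGraph.mem_edgeSet, Sym2.isDiag_iff_proj_eq]
      constructor
      · rintro (⟨h, hn⟩ | ⟨h, _⟩)
        · exact Or.inl ⟨h, hn⟩
        · exact Or.inr h
      · rintro (⟨h, hn⟩ | h)
        · exact Or.inl ⟨h, hn⟩
        · refine Or.inr ⟨h, ?_⟩
          rw [Sym2.eq_iff] at h
          intro hab'
          obtain rfl : a = b := hab'
          rcases h with ⟨rfl, rfl⟩ | ⟨rfl, rfl⟩ <;> exact hne rfl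
  all_goals
    have hadj' : ∀ a b : V,
        ((T \ SimpleGraph.fromEdgeSet {s(u, v₂)}) ⊔ SimpleGraph.fromEdgeSet {s(v₁, v₂)}).Adj a b
          ↔ (T.Adj a b ∧ s(a, b) ≠ s(u, v₂)) ∨ (s(a, b) = s(v₁, v₂) ∧ a ≠ b) := by
      intro a b
      simp only [SimpleGraph.sup_adj, SimpleGraph.sdiff_adj, SimpleGraph.fromEdgeSet_adj,
        Set.mem_singleton_iff]
      constructor
      · rintro (⟨h, hn⟩ | ⟨h, hn⟩)
        · exact Or.inl ⟨h, fun hcon => hn ⟨hcon, h.ne⟩⟩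
        · exact Or.inr ⟨h, hn⟩
      · rintro (⟨h, hn⟩ | ⟨h, hn⟩)
        · exact Or.inl ⟨h, fun hcon => hn hcon.1⟩
        · exact Or.inr ⟨h, hn⟩
  case refine_1 =>
    have hadjuv1 : ((T \ SimpleGraph.fromEdgeSet {s(u, v₂)})
        ⊔ SimpleGraph.fromEdgeSet {s(v₁, v₂)}).Adj u v₁ := by
      rw [hadj']
      refine Or.inl ⟨h1, ?_⟩
      rw [Ne, Sym2.eq_iff]
      push_neg
      exact ⟨fun _ => hne, fun h => absurd h hu2⟩
    have hadjv12 : ((T \ SimpleGraph.fromEdgeSet {s(u, v₂)})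
        ⊔ SimpleGraph.fromEdgeSet {s(v₁, v₂)}).Adj v₁ v₂ := by
      rw [hadj']
      exact Or.inr ⟨rfl, hne⟩
    have key : ∀ a b, T.Adj a b →
        ((T \ SimpleGraph.fromEdgeSet {s(u, v₂)})
          ⊔ SimpleGraph.fromEdgeSet {s(v₁, v₂)}).Reachable a b := by
      intro a b hab
      by_cases hab' : s(a, b) = s(u, v₂)
      · rw [Sym2.eq_iff] at hab'
        rcases hab' with ⟨rfl, rfl⟩ | ⟨rfl, rfl⟩
        · exact hadjuv1.reachable.trans hadjv12.reachable
        · exact (hadjuv1.reachable.trans hadjv12.reachable).symm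
      · exact ((hadj' a b).mpr (Or.inl ⟨hab, hab'⟩)).reachable
    haveI : Nonempty V := hc.nonempty
    exact SimpleGraph.Connected.mk
      (fun a b => reachable_of_forall_adj key (hc.preconnected a b))
  case refine_2 =>
    intro x c hcyc
    by_cases he' : s(v₁, v₂) ∈ c.edges
    · have hreach : (((T \ SimpleGraph.fromEdgeSet {s(u, v₂)})
          ⊔ SimpleGraph.fromEdgeSet {s(v₁, v₂)})
            \ SimpleGraph.fromEdgeSet {s(v₁, v₂)}).Reachable v₁ v₂ :=
        (SimpleGraph.adj_and_reachable_delete_edges_iff_exists_cycle.mpr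
          ⟨x, c, hcyc, he'⟩).2
      have hle : (((T \ SimpleGraph.fromEdgeSet {s(u, v₂)})
          ⊔ SimpleGraph.fromEdgeSet {s(v₁, v₂)}) \ SimpleGraph.fromEdgeSet {s(v₁, v₂)})
            ≤ (T \ SimpleGraph.fromEdgeSet {s(u, v₂)}) := by
        intro a b hab
        rw [SimpleGraph.sdiff_adj] at hab
        obtain ⟨hab1, hab2⟩ := hab
        rw [hadj'] at hab1
        rw [SimpleGraph.sdiff_adj]
        rcases hab1 with ⟨h, hn⟩ | ⟨h, hn⟩
        · refine ⟨h, ?_⟩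
          rw [SimpleGraph.fromEdgeSet_adj]
          simp [hn]
        · exact absurd (by rw [SimpleGraph.fromEdgeSet_adj]; exact ⟨h, hn⟩) hab2
      have hreach2 : (T \ SimpleGraph.fromEdgeSet {s(u, v₂)}).Reachable u v₂ := by
        have hadj1 : (T \ SimpleGraph.fromEdgeSet {s(u, v₂)}).Adj u v₁ := by
          rw [SimpleGraph.sdiff_adj, SimpleGraph.fromEdgeSet_adj]
          refine ⟨h1, ?_⟩
          simp only [Set.mem_singleton_iff, not_and]
          intro hcontra
          rw [Sym2.eq_iff] at hcontra
          rcases hcontra with ⟨_, h⟩ | ⟨h, _⟩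
          · exact absurd h hne
          · exact absurd h hu2
        exact hadj1.reachable.trans (hreach.mono hle)
      have hbridge : T.IsBridge s(u, v₂) :=
        SimpleGraph.isAcyclic_iff_forall_adj_isBridge.mp ha h2
      rw [SimpleGraph.isBridge_iff] at hbridge
      exact hbridge hreach2
    · have hsub : ∀ f ∈ c.edges, f ∈ T.edgeSet := by
        intro f hf
        have hmem := c.edges_subset_edgeSet hf
        simp only [SimpleGraph.edgeSet_sup, SimpleGraph.edgeSet_sdiff,
          SimpleGraph.edgeSet_fromEdgeSet, SimpleGraph.edgeSet_sdiff_sdiff_isDiag,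
          Set.mem_union, Set.mem_diff, Set.mem_singleton_iff] at hmem
        rcases hmem with ⟨h, _⟩ | ⟨h, _⟩
        · exact h
        · exact absurd (h ▸ hf) he'
      exact ha (c.transfer T hsub) (hcyc.transfer hsub)

lemma edgeWeight_swap_lt {V : Type*} [Fintype V] (p : V → EuclideanSpace ℝ (Fin 2))
    (T T' : SimpleGraph V) (e e' : Sym2 V)
    (hE : T'.edgeSet = (T.edgeSet \ {e}) ∪ {e'}) (he : e ∈ T.edgeSet) (he' : e' ∉ T.edgeSet)
    (hlt : Sym2.lift ⟨fun a b => dist (p a) (p b), fun a b => by simp [dist_comm]⟩ e' <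
           Sym2.lift ⟨fun a b => dist (p a) (p b), fun a b => by simp [dist_comm]⟩ e) :
    edgeWeight p T' < edgeWeight p T := by
  classical
  simp only [edgeWeight]
  have heq : T'.edgeFinset = insert e' (T.edgeFinset.erase e) := by
    ext f
    simp only [SimpleGraph.mem_edgeFinset, SimpleGraph.mem_edgeSet, hE, Set.mem_union,
      Set.mem_diff, Set.mem_singleton_iff, Finset.mem_insert, Finset.mem_erase]
    tauto
  rw [heq]
  rw [Finset.sum_insert (by
    simp only [Finset.mem_erase, SimpleGraph.mem_edgeFinset]
    tauto)]
  rw [Finset.sum_erase_eq_sub (by simpa [SimpleGraph.mem_edgeFinset] using he)]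
  linarith

lemma mst_angle_key {V : Type*} [Fintype V]
    (p : V → EuclideanSpace ℝ (Fin 2)) (hp : Function.Injective p)
    (T : SimpleGraph V) (hT : IsEMST p T)
    (u v₁ v₂ : V) (h1 : T.Adj u v₁) (h2 : T.Adj u v₂) (hne : v₁ ≠ v₂)
    (hle : dist (p u) (p v₁) ≤ dist (p u) (p v₂)) :
    π / 3 ≤ ∠ (p v₁) (p u) (p v₂) := by
  classical
  by_contra hangle
  push_neg at hangle
  obtain ⟨hconn, hacyc, hmin⟩ := hT
  obtain ⟨⟨T', hc', ha', hE⟩, hnoadj⟩ := tree_swap T hconn hacyc h1 h2 hne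
  have hlt : dist (p v₁) (p v₂) < dist (p u) (p v₂) := by
    have h := dist_lt_of_angle_lt (a := p v₁) (b := p u) (c := p v₂)
      (hp.ne_iff.mpr h1.ne.symm)
      (by rw [dist_comm (p v₁) (p u), dist_comm (p v₂) (p u)]; exact hle) hangle
    rwa [dist_comm (p v₂) (p u)] at h
  have hW : edgeWeight p T' < edgeWeight p T := by
    apply edgeWeight_swap_lt p T T' s(u, v₂) s(v₁, v₂) hE
      ((SimpleGraph.mem_edgeSet T).mpr h2) (fun h => hnoadj ((SimpleGraph.mem_edgeSet T).mp h))
    simpa using hlt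
  exact absurd (hmin T' hc' ha') (not_le.mpr hW)

theorem mst_angle_ge_pi_div_three {V : Type*} [Fintype V]
    (p : V → EuclideanSpace ℝ (Fin 2)) (hp : Function.Injective p)
    (T : SimpleGraph V) (hT : IsEMST p T)
    (u v₁ v₂ : V) (h1 : T.Adj u v₁) (h2 : T.Adj u v₂) (hne : v₁ ≠ v₂) :
    π / 3 ≤ ∠ (p v₁) (p u) (p v₂) := by
  rcases le_total (dist (p u) (p v₁)) (dist (p u) (p v₂)) with hle | hle
  · exact mst_angle_key p hp T hT u v₁ v₂ h1 h2 hne hle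
  · rw [angle_comm]
    exact mst_angle_key p hp T hT u v₂ v₁ h2 h1 hne.symm hle
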